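/- If {w_n} is a sequence in the open unit disk satisfying (1 - |w_n|)/(1 - |w_{n-1}|) ≤ c for all n, where 0 < c < 1, then for every k, ∏_{j ≠ k} d(w_k, w_j) ≥ (∏_{j=1}^∞ (1 - c^j)/(1 + c^j))². -/

import Mathlib

open Metric

/-- The pseudohyperbolic distance on the unit disk. -/
noncomputable def pd (z w : ℂ) : ℝ := ‖(z - w) / (1 - (starRingEnd ℂ) w * z)‖

lemma key_id (z w : ℂ) :
    ‖1 - (starRingEnd ℂ) w * z‖ ^ 2 - ‖z - w‖ ^ 2
    = (1 - ‖z‖ ^ 2) * (1 - ‖w‖ ^ 2) := by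
  simp only [Complex.sq_norm, Complex.normSq_apply, Complex.sub_re, Complex.sub_im,
    Complex.one_re, Complex.one_im, Complex.mul_re, Complex.mul_im,
    Complex.conj_re, Complex.conj_im]
  ring

lemma pd_symm (z w : ℂ) : pd z w = pd w z := by
  unfold pd
  rw [norm_div, norm_div]
  congr 1
  · exact norm_sub_rev z w
  · rw [← Complex.norm_conj]
    congr 1
    simp [map_sub, map_mul, mul_comm]

lemma pd_nonneg (z w : ℂ) : 0 ≤ pd z w := norm_nonneg _

lemma denom_ge (z w : ℂ) :
    1 - ‖z‖ * ‖w‖ ≤ ‖1 - (starRingEnd ℂ) w * z‖ := by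
  have h := norm_add_le (1 - (starRingEnd ℂ) w * z) ((starRingEnd ℂ) w * z)
  simp only [sub_add_cancel, norm_one, norm_mul, Complex.norm_conj] at h
  linarith [h, mul_comm (‖w‖) (‖z‖)]

lemma pd_le_one (z w : ℂ) (hz : ‖z‖ < 1) (hw : ‖w‖ < 1) :
    pd z w ≤ 1 := by
  have hab : ‖z‖ * ‖w‖ < 1 := by
    nlinarith [norm_nonneg z, norm_nonneg w]
  have hD : 0 < ‖1 - (starRingEnd ℂ) w * z‖ :=
    lt_of_lt_of_le (by linarith) (denom_ge z w)
  have hk := key_id z w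
  have hP : 0 ≤ (1 - ‖z‖ ^ 2) * (1 - ‖w‖ ^ 2) := by
    have h1 : 0 ≤ 1 - ‖z‖ ^ 2 := by
      nlinarith [mul_nonneg (sub_nonneg.mpr hz.le)
        (by linarith [norm_nonneg z] : (0:ℝ) ≤ 1 + ‖z‖)]
    have h2 : 0 ≤ 1 - ‖w‖ ^ 2 := by
      nlinarith [mul_nonneg (sub_nonneg.mpr hw.le)
        (by linarith [norm_nonneg w] : (0:ℝ) ≤ 1 + ‖w‖)]
    exact mul_nonneg h1 h2
  have hnum : ‖z - w‖ ≤ ‖1 - (starRingEnd ℂ) w * z‖ :=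
    le_of_pow_le_pow_left₀ two_ne_zero hD.le (by linarith)
  unfold pd
  rw [norm_div]
  exact div_le_one_of_le₀ hnum hD.le

lemma pd_ge (z w : ℂ) (hz : ‖z‖ < 1) (hw : ‖w‖ < 1)
    (hle : ‖w‖ ≤ ‖z‖) :
    (‖z‖ - ‖w‖) / (1 - ‖z‖ * ‖w‖) ≤ pd z w := by
  set a := ‖z‖
  set b := ‖w‖
  have hb0 : 0 ≤ b := norm_nonneg w
  have ha0 : 0 ≤ a := norm_nonneg z
  have hab : a * b < 1 := by nlinarith
  set D := ‖1 - (starRingEnd ℂ) w * z‖ with hDdef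
  have hD1 : 1 - a * b ≤ D := denom_ge z w
  have hD : 0 < D := lt_of_lt_of_le (by linarith) hD1
  set N := ‖z - w‖ with hNdef
  have hN0 : 0 ≤ N := norm_nonneg _
  have hk : D ^ 2 - N ^ 2 = (1 - a ^ 2) * (1 - b ^ 2) := key_id z w
  have hpd : pd z w = N / D := by unfold pd; rw [norm_div]
  rw [hpd, div_le_div_iff₀ (by linarith) hD]
  have hP : 0 ≤ (1 - a ^ 2) * (1 - b ^ 2) := by
    have h1 : 0 ≤ 1 - a ^ 2 := by
      nlinarith [mul_nonneg (sub_nonneg.mpr hz.le) (by linarith : (0:ℝ) ≤ 1 + a)]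
    have h2 : 0 ≤ 1 - b ^ 2 := by
      nlinarith [mul_nonneg (sub_nonneg.mpr hw.le) (by linarith : (0:ℝ) ≤ 1 + b)]
    exact mul_nonneg h1 h2
  have hDD : (1 - a * b) ^ 2 ≤ D ^ 2 := by nlinarith
  have hN2 : N ^ 2 = D ^ 2 - (1 - a ^ 2) * (1 - b ^ 2) := by linarith
  have hexp : (N * (1 - a * b)) ^ 2 = (D ^ 2 - (1 - a ^ 2) * (1 - b ^ 2)) * (1 - a * b) ^ 2 := by
    rw [mul_pow, hN2]
  have hsq : ((a - b) * D) ^ 2 ≤ (N * (1 - a * b)) ^ 2 := by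
    nlinarith [mul_nonneg hP (sub_nonneg.mpr hDD)]
  exact le_of_pow_le_pow_left₀ two_ne_zero (mul_nonneg hN0 (by linarith)) hsq

lemma prod_antitone_of_le_one {f : ℕ → ℝ} (h0 : ∀ i, 0 ≤ f i) (h1 : ∀ i, f i ≤ 1) :
    Antitone (fun s : Finset ℕ => ∏ i ∈ s, f i) := by
  intro s t hst
  have h2 : ∏ i ∈ t \ s, f i ≤ 1 := Finset.prod_le_one (fun i _ => h0 i) (fun i _ => h1 i)
  have h3 : 0 ≤ ∏ i ∈ s, f i := Finset.prod_nonneg fun i _ => h0 i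
  calc ∏ i ∈ t, f i = (∏ i ∈ t \ s, f i) * ∏ i ∈ s, f i := (Finset.prod_sdiff hst).symm
    _ ≤ 1 * ∏ i ∈ s, f i := mul_le_mul_of_nonneg_right h2 h3
    _ = ∏ i ∈ s, f i := one_mul _

lemma hasProd_iInf_of_le_one {f : ℕ → ℝ} (h0 : ∀ i, 0 ≤ f i) (h1 : ∀ i, f i ≤ 1) :
    HasProd f (⨅ s : Finset ℕ, ∏ i ∈ s, f i) := by
  have hb : BddBelow (Set.range fun s : Finset ℕ => ∏ i ∈ s, f i) := by
    refine ⟨0, ?_⟩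
    rintro x ⟨s, rfl⟩
    exact Finset.prod_nonneg fun i _ => h0 i
  exact tendsto_atTop_ciInf (prod_antitone_of_le_one h0 h1) hb

lemma tprod_eq_iInf_of_le_one {f : ℕ → ℝ} (h0 : ∀ i, 0 ≤ f i) (h1 : ∀ i, f i ≤ 1) :
    ∏' i, f i = ⨅ s : Finset ℕ, ∏ i ∈ s, f i :=
  (hasProd_iInf_of_le_one h0 h1).tprod_eq

lemma tprod_le_prod_of_le_one {f : ℕ → ℝ} (h0 : ∀ i, 0 ≤ f i) (h1 : ∀ i, f i ≤ 1)
    (s : Finset ℕ) : ∏' i, f i ≤ ∏ i ∈ s, f i := by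
  rw [tprod_eq_iInf_of_le_one h0 h1]
  exact ciInf_le ⟨0, by rintro x ⟨t, rfl⟩; exact Finset.prod_nonneg fun i _ => h0 i⟩ s

lemma le_tprod_of_le_one {f : ℕ → ℝ} (h0 : ∀ i, 0 ≤ f i) (h1 : ∀ i, f i ≤ 1)
    {L : ℝ} (hL : ∀ s : Finset ℕ, L ≤ ∏ i ∈ s, f i) : L ≤ ∏' i, f i := by
  rw [tprod_eq_iInf_of_le_one h0 h1]
  exact le_ciInf hL

lemma ratio_step (x y t : ℝ) (hx0 : 0 < x) (hx1 : x ≤ 1) (hy0 : 0 < y)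
    (ht0 : 0 < t) (ht1 : t < 1) (hyx : y ≤ t * x) :
    (1 - t) / (1 + t) ≤ ((1 - y) - (1 - x)) / (1 - (1 - y) * (1 - x)) := by
  have hden : 0 < 1 - (1 - y) * (1 - x) := by nlinarith
  rw [div_le_div_iff₀ (by linarith) hden]
  nlinarith [mul_nonneg hy0.le hx0.le, mul_nonneg (mul_nonneg hy0.le hx0.le) ht0.le]

lemma iter_bound (w : ℕ → ℂ) (hw : ∀ n, ‖w n‖ < 1)
    (c : ℝ) (hc0 : 0 < c)
    (hrat : ∀ n, (1 - ‖w (n+1)‖) / (1 - ‖w n‖) ≤ c) :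
    ∀ n m, 1 - ‖w (n + m)‖ ≤ c ^ m * (1 - ‖w n‖) := by
  intro n m
  induction m with
  | zero => simp
  | succ m ih =>
    have h1 : 0 < 1 - ‖w (n + m)‖ := by linarith [hw (n + m)]
    have h2 : 1 - ‖w (n + m + 1)‖ ≤ c * (1 - ‖w (n + m)‖) :=
      (div_le_iff₀ h1).mp (hrat (n + m))
    have h3 : c * (1 - ‖w (n + m)‖) ≤ c * (c ^ m * (1 - ‖w n‖)) :=
      mul_le_mul_of_nonneg_left ih hc0.le
    calc 1 - ‖w (n + (m + 1))‖ = 1 - ‖w (n + m + 1)‖ := by ring_nf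
      _ ≤ c * (c ^ m * (1 - ‖w n‖)) := le_trans h2 h3
      _ = c ^ (m + 1) * (1 - ‖w n‖) := by ring

lemma factor_bound (w : ℕ → ℂ) (hw : ∀ n, ‖w n‖ < 1)
    (c : ℝ) (hc0 : 0 < c) (hc1 : c < 1)
    (hrat : ∀ n, (1 - ‖w (n+1)‖) / (1 - ‖w n‖) ≤ c)
    (n m : ℕ) (hm : m ≠ 0) :
    (1 - c ^ m) / (1 + c ^ m) ≤ pd (w n) (w (n + m)) := by
  set a := ‖w (n + m)‖
  set b := ‖w n‖
  have ha1 : a < 1 := hw (n + m)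
  have hb1 : b < 1 := hw n
  have ha0 : 0 ≤ a := norm_nonneg _
  have hb0 : 0 ≤ b := norm_nonneg _
  have ht0 : 0 < c ^ m := pow_pos hc0 m
  have ht1 : c ^ m < 1 := pow_lt_one₀ hc0.le hc1 hm
  have hiter : 1 - a ≤ c ^ m * (1 - b) := iter_bound w hw c hc0 hrat n m
  have hba : b ≤ a := by nlinarith
  have hstep := ratio_step (1 - b) (1 - a) (c ^ m)
    (by linarith) (by linarith) (by linarith) ht0 ht1 hiter
  simp only [sub_sub_cancel] at hstep
  have hge := pd_ge (w (n + m)) (w n) ha1 hb1 hba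
  rw [pd_symm]
  exact le_trans hstep hge

theorem separation_lower_bound_of_ratio_le
    (w : ℕ → ℂ) (hw : ∀ n, w n ∈ ball (0:ℂ) 1)
    (c : ℝ) (hc0 : 0 < c) (hc1 : c < 1)
    (hrat : ∀ n, (1 - ‖w (n+1)‖) / (1 - ‖w n‖) ≤ c) :
    ∀ k, (∏' j : ℕ, (1 - c^(j+1)) / (1 + c^(j+1)))^2
      ≤ ∏' j : ℕ, if j = k then 1 else pd (w k) (w j) := by
  intro k
  have hw' : ∀ n, ‖w n‖ < 1 := by
    intro n
    have := hw n
    rwa [mem_ball, dist_zero_right] at this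
  set G : ℕ → ℝ := fun j => (1 - c ^ (j + 1)) / (1 + c ^ (j + 1)) with hGdef
  set F : ℕ → ℝ := fun j => if j = k then 1 else pd (w k) (w j) with hFdef
  have hcj0 : ∀ j : ℕ, 0 < c ^ (j + 1) := fun j => pow_pos hc0 _
  have hcj1 : ∀ j : ℕ, c ^ (j + 1) < 1 := fun j => pow_lt_one₀ hc0.le hc1 (Nat.succ_ne_zero j)
  have hG0 : ∀ j, 0 ≤ G j := fun j =>
    div_nonneg (by linarith [hcj1 j]) (by linarith [hcj0 j])
  have hG1 : ∀ j, G j ≤ 1 := fun j =>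
    div_le_one_of_le₀ (by linarith [hcj0 j]) (by linarith [hcj0 j])
  have hF0 : ∀ j, 0 ≤ F j := by
    intro j
    simp only [hFdef]
    split
    · exact zero_le_one
    · exact pd_nonneg _ _
  have hF1 : ∀ j, F j ≤ 1 := by
    intro j
    simp only [hFdef]
    split
    · exact le_refl 1
    · exact pd_le_one _ _ (hw' k) (hw' j)
  set T : ℝ := ∏' j, G j with hTdef
  have hT0 : 0 ≤ T :=
    le_tprod_of_le_one hG0 hG1 fun s => Finset.prod_nonneg fun i _ => hG0 i
  -- main finite-set estimate
  have key : ∀ s : Finset ℕ, T ^ 2 ≤ ∏ j ∈ s, F j := by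
    intro s
    have hFk : F k = 1 := by simp [hFdef]
    rw [← Finset.prod_erase s hFk]
    set s' := s.erase k with hs'
    rw [← Finset.prod_filter_mul_prod_filter_not s' (· < k) F]
    -- bound for sets strictly below k
    have below : T ≤ ∏ j ∈ s'.filter (· < k), F j := by
      set t := s'.filter (· < k) with ht
      have hmem : ∀ j ∈ t, j < k := by
        intro j hj
        exact (Finset.mem_filter.mp hj).2
      have hinj : ∀ x ∈ t, ∀ y ∈ t, k - x - 1 = k - y - 1 → x = y := by
        intro x hx y hy h
        have := hmem x hx
        have := hmem y hy
        omega
      have h1 : ∏ i ∈ t.image (fun j => k - j - 1), G i = ∏ j ∈ t, G (k - j - 1) :=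
        Finset.prod_image hinj
      have h2 : T ≤ ∏ i ∈ t.image (fun j => k - j - 1), G i :=
        tprod_le_prod_of_le_one hG0 hG1 _
      have h3 : ∏ j ∈ t, G (k - j - 1) ≤ ∏ j ∈ t, F j := by
        apply Finset.prod_le_prod (fun j _ => hG0 _)
        intro j hj
        have hjk := hmem j hj
        have heq : k - j - 1 + 1 = k - j := by omega
        have hkeq : j + (k - j) = k := by omega
        have hb := factor_bound w hw' c hc0 hc1 hrat j (k - j) (by omega)
        rw [hkeq] at hb
        simp only [hGdef, hFdef, heq]
        rw [if_neg (by omega : j ≠ k), pd_symm]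
        exact hb
      calc T ≤ ∏ i ∈ t.image (fun j => k - j - 1), G i := h2
        _ = ∏ j ∈ t, G (k - j - 1) := h1
        _ ≤ ∏ j ∈ t, F j := h3
    -- bound for sets strictly above k
    have above : T ≤ ∏ j ∈ s'.filter (fun j => ¬ j < k), F j := by
      set t := s'.filter (fun j => ¬ j < k) with ht
      have hmem : ∀ j ∈ t, k < j := by
        intro j hj
        have h1 := (Finset.mem_filter.mp hj).2
        have h2 : j ≠ k := Finset.ne_of_mem_erase (Finset.mem_filter.mp hj).1
        omega
      have hinj : ∀ x ∈ t, ∀ y ∈ t, x - k - 1 = y - k - 1 → x = y := by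
        intro x hx y hy h
        have := hmem x hx
        have := hmem y hy
        omega
      have h1 : ∏ i ∈ t.image (fun j => j - k - 1), G i = ∏ j ∈ t, G (j - k - 1) :=
        Finset.prod_image hinj
      have h2 : T ≤ ∏ i ∈ t.image (fun j => j - k - 1), G i :=
        tprod_le_prod_of_le_one hG0 hG1 _
      have h3 : ∏ j ∈ t, G (j - k - 1) ≤ ∏ j ∈ t, F j := by
        apply Finset.prod_le_prod (fun j _ => hG0 _)
        intro j hj
        have hjk := hmem j hj
        have heq : j - k - 1 + 1 = j - k := by omega
        have hkeq : k + (j - k) = j := by omega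
        have hb := factor_bound w hw' c hc0 hc1 hrat k (j - k) (by omega)
        rw [hkeq] at hb
        simp only [hGdef, hFdef, heq]
        rw [if_neg (by omega : j ≠ k)]
        exact hb
      calc T ≤ ∏ i ∈ t.image (fun j => j - k - 1), G i := h2
        _ = ∏ j ∈ t, G (j - k - 1) := h1
        _ ≤ ∏ j ∈ t, F j := h3
    have hBnn : 0 ≤ ∏ j ∈ s'.filter (· < k), F j :=
      Finset.prod_nonneg fun j _ => hF0 j
    calc T ^ 2 = T * T := sq T
      _ ≤ (∏ j ∈ s'.filter (· < k), F j) * ∏ j ∈ s'.filter (fun j => ¬ j < k), F j :=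
        mul_le_mul below above hT0 hBnn
  exact le_tprod_of_le_one hF0 hF1 key
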